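/- Let Σ be a finite alphabet with |Σ| = k and let L be a commutative language over Σ that is recognized by a DFA with n states. Then the downward closure ↓L is recognized by some DFA with at most n^k states. -/

import Mathlib

open List

def IsCommutativeLang {α : Type} (L : Language α) : Prop :=
  ∀ u v : List α, u ~ v → (u ∈ L ↔ v ∈ L)

def UpClosure {α : Type} (L : Language α) : Language α :=
  {v | ∃ u ∈ L, u <+ v}

def DownClosure {α : Type} (L : Language α) : Language α :=
  {u | ∃ v ∈ L, u <+ v}

def UpInterior {α : Type} (L : Language α) : Language α :=
  {w | ∃ U : Language α, (∀ x ∈ U, x ∈ L) ∧ UpClosure U = U ∧ w ∈ U}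

def DownInterior {α : Type} (L : Language α) : Language α :=
  {w | ∃ U : Language α, (∀ x ∈ U, x ∈ L) ∧ DownClosure U = U ∧ w ∈ U}

def RecognizedBy {α : Type} (L : Language α) (n : ℕ) : Prop :=
  ∃ (σ : Type) (_ : Fintype σ) (M : DFA α σ), Fintype.card σ = n ∧ M.accepts = L

noncomputable def sc {α : Type} (L : Language α) : ℕ :=
  sInf {n | RecognizedBy L n}

def Nerode {α : Type} (L : Language α) (u v : List α) : Prop :=
  ∀ x : List α, u ++ x ∈ L ↔ v ++ x ∈ L

inductive IsShuffle {α : Type} : List α → List α → List α → Prop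
  | nil : IsShuffle [] [] []
  | left (x : α) {u v w : List α} : IsShuffle u v w → IsShuffle (x :: u) v (x :: w)
  | right (y : α) {u v w : List α} : IsShuffle u v w → IsShuffle u (y :: v) (y :: w)

def Shuffle {α : Type} (U V : Language α) : Language α :=
  {w | ∃ u ∈ U, ∃ v ∈ V, IsShuffle u v w}

def IsPermDFA {α σ : Type} (M : DFA α σ) : Prop :=
  ∀ a : α, Function.Bijective fun q => M.step q a

def IsGroupLang {α : Type} (L : Language α) : Prop :=
  ∃ (σ : Type) (_ : Fintype σ) (M : DFA α σ), IsPermDFA M ∧ M.accepts = L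

def wpow {α : Type} (w : List α) (n : ℕ) : List α :=
  (List.replicate n w).flatten

def IsAperiodicDFA {α σ : Type} (M : DFA α σ) : Prop :=
  ∀ (q : σ) (w : List α) (n : ℕ), 1 ≤ n → M.evalFrom q (wpow w n) = q → M.evalFrom q w = q

def IsAperiodicLang {α : Type} (L : Language α) : Prop :=
  ∃ (σ : Type) (_ : Fintype σ) (M : DFA α σ), IsAperiodicDFA M ∧ M.accepts = L

def ShuffleList {α : Type} : List (Language α) → Language α
  | [] => {([] : List α)}
  | L :: Ls => Shuffle L (ShuffleList Ls)

def UnaryGroupLang {α : Type} (a : α) (U : Language α) : Prop :=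
  (∀ w ∈ U, ∀ x ∈ w, x = a) ∧
  ∃ (σ : Type) (_ : Fintype σ) (M : DFA Unit σ), IsPermDFA M ∧
    ∀ n : ℕ, (List.replicate n a ∈ U ↔ List.replicate n () ∈ M.accepts)

def UnaryAperiodicLang {α : Type} (a : α) (U : Language α) : Prop :=
  (∀ w ∈ U, ∀ x ∈ w, x = a) ∧
  ∃ (σ : Type) (_ : Fintype σ) (M : DFA Unit σ), IsAperiodicDFA M ∧
    ∀ n : ℕ, (List.replicate n a ∈ U ↔ List.replicate n () ∈ M.accepts)

section Aux

variable {α σ : Type} [DecidableEq α]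

/-- Bump the `a`-count of a word in a commutative regular language. -/
lemma bump_lemma (M : DFA α σ) (L : Language α) (hL : M.accepts = L)
    (hcomm : IsCommutativeLang L) (a : α) (m m' : ℕ)
    (hs : M.eval (replicate m a) = M.eval (replicate m' a))
    (v : List α) (hv : v ∈ L) (hm : m ≤ v.count a) :
    ∃ v' ∈ L, v'.count a = v.count a - m + m' ∧ ∀ b, b ≠ a → v'.count b = v.count b := by
  classical
  set p : α → Bool := fun x => decide (x = a) with hp
  set r : List α := v.filter (fun x => !p x) with hr
  have hperm : replicate (v.count a) a ++ r ~ v := by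
    have := List.filter_append_perm p v
    rwa [hp, List.filter_eq a] at this
  have hcount_r_a : r.count a = 0 := by
    rw [List.count_eq_zero]
    intro ha
    have := List.of_mem_filter ha
    simp [hp] at this
  have hcount_r : ∀ b, b ≠ a → r.count b = v.count b := by
    intro b hb
    rw [hr, List.count_filter]
    simp [hp, hb]
  refine ⟨replicate (v.count a - m + m') a ++ r, ?_, ?_, ?_⟩
  · -- membership
    have hv1 : replicate (v.count a) a ++ r ∈ M.accepts := by
      rw [hL]; exact (hcomm _ _ hperm).mpr hv
    rw [← hL]
    rw [DFA.mem_accepts] at hv1 ⊢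
    have key : M.eval (replicate (v.count a - m + m') a ++ r)
        = M.eval (replicate (v.count a) a ++ r) := by
      have h1 : M.eval (replicate (v.count a - m + m') a)
          = M.eval (replicate (v.count a) a) := by
        have e1 : replicate (v.count a - m + m') a
            = replicate m' a ++ replicate (v.count a - m) a := by
          rw [← List.replicate_add]; ring_nf
        have e2 : replicate (v.count a) a
            = replicate m a ++ replicate (v.count a - m) a := by
          rw [← List.replicate_add, Nat.add_sub_cancel' hm]
        rw [e1, e2]
        unfold DFA.eval
        rw [DFA.evalFrom_of_append, DFA.evalFrom_of_append]
        rw [show M.evalFrom M.start (replicate m' a) = M.eval (replicate m' a) from rfl,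
          show M.evalFrom M.start (replicate m a) = M.eval (replicate m a) from rfl, hs]
      unfold DFA.eval at h1 ⊢
      rw [DFA.evalFrom_of_append, DFA.evalFrom_of_append, h1]
    rwa [key]
  · simp [List.count_append, hcount_r_a]
  · intro b hb
    simp [List.count_append, hcount_r b hb, List.count_replicate, hb, Ne.symm hb]

lemma multi_bump (M : DFA α σ) (L : Language α) (hL : M.accepts = L)
    (hcomm : IsCommutativeLang L) (c c' : α → ℕ)
    (hs : ∀ a, M.eval (replicate (c a) a) = M.eval (replicate (c' a) a)) :
    ∀ l : List α, ∀ v ∈ L, (∀ a, c a ≤ v.count a) →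
      ∃ v' ∈ L, (∀ a, c a ≤ v'.count a) ∧ ∀ a ∈ l, c' a ≤ v'.count a := by
  intro l
  induction l with
  | nil => intro v hv hc; exact ⟨v, hv, hc, by simp⟩
  | cons a l ih =>
    intro v hv hc
    obtain ⟨v', hv', hc1, hc2⟩ := ih v hv hc
    by_cases hca : c' a ≤ c a
    · exact ⟨v', hv', hc1, by
        intro b hb
        rcases List.mem_cons.mp hb with h | h
        · subst h; exact le_trans hca (hc1 b)
        · exact hc2 b h⟩
    · push_neg at hca
      obtain ⟨v'', hv'', hca'', hother⟩ :=
        bump_lemma M L hL hcomm a (c a) (c' a) (hs a) v' hv' (hc1 a)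
      refine ⟨v'', hv'', ?_, ?_⟩
      · intro b
        by_cases hb : b = a
        · subst hb
          rw [hca'']
          omega
        · rw [hother b hb]; exact hc1 b
      · intro b hb
        by_cases hba : b = a
        · subst hba
          rw [hca'']
          have := hc1 b
          omega
        · rw [hother b hba]
          refine hc2 b ?_
          rcases List.mem_cons.mp hb with h | h
          · exact absurd h hba
          · exact h

lemma down_transfer [Fintype α] (M : DFA α σ) (L : Language α) (hL : M.accepts = L)
    (hcomm : IsCommutativeLang L) (u u' : List α)
    (hs : ∀ a, M.eval (replicate (u.count a) a) = M.eval (replicate (u'.count a) a))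
    (hu : u ∈ DownClosure L) : u' ∈ DownClosure L := by
  obtain ⟨v, hv, huv⟩ := hu
  have hcle : ∀ a, u.count a ≤ v.count a := fun a => huv.count_le a
  obtain ⟨v', hv', _, hc2⟩ := multi_bump M L hL hcomm (fun a => u.count a)
    (fun a => u'.count a) hs (Finset.univ : Finset α).toList v hv hcle
  have hsub : u' <+~ v' := by
    rw [List.subperm_ext_iff]
    intro x _
    exact hc2 x (by simp)
  obtain ⟨w, hwv', huw⟩ := List.subperm_iff.mp hsub
  exact ⟨w, (hcomm _ _ hwv'.symm).mp hv', huw⟩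

end Aux

/-- downward closure of a commutative language recognized by a DFA with
`n` states is recognized by a DFA with at most `n ^ k` states, `k` the alphabet size. -/
theorem downClosure_state_bound {α : Type} [Fintype α] (k n : ℕ)
    (hk : Fintype.card α = k) (L : Language α) (hcomm : IsCommutativeLang L)
    (hrec : ∃ (σ : Type) (_ : Fintype σ) (M : DFA α σ),
      Fintype.card σ = n ∧ M.accepts = L) :
    ∃ (τ : Type) (_ : Fintype τ) (M' : DFA α τ),
      Fintype.card τ ≤ n ^ k ∧ M'.accepts = DownClosure L := by
  classical
  obtain ⟨σ, instσ, M, hcard, hL⟩ := hrec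
  set M' : DFA α (α → σ) :=
    { step := fun f b => fun x => if x = b then M.step (f x) x else f x
      start := fun _ => M.start
      accept := {f | ∃ u ∈ DownClosure L,
        ∀ a, M.eval (replicate (u.count a) a) = f a} } with hM'
  have heval : ∀ (w : List α) (f : α → σ) (a : α),
      M'.evalFrom f w a = M.evalFrom (f a) (replicate (w.count a) a) := by
    intro w
    induction w with
    | nil => intro f a; simp [DFA.evalFrom]
    | cons b w ih =>
      intro f a
      have h1 : M'.evalFrom f (b :: w) = M'.evalFrom (M'.step f b) w := rfl
      rw [h1, ih]
      by_cases hab : a = b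
      · subst hab
        have hc : (a :: w).count a = w.count a + 1 := by
          simp [List.count_cons]
        rw [hc, List.replicate_succ]
        have h2 : M.evalFrom (f a) (a :: replicate (w.count a) a)
            = M.evalFrom (M.step (f a) a) (replicate (w.count a) a) := rfl
        rw [h2]
        congr 1
        simp [hM']
      · have hc : (b :: w).count a = w.count a := by
          simp [List.count_cons, hab, Ne.symm hab]
        rw [hc]
        congr 1
        simp [hM', hab]
  have hevalw : ∀ (w : List α) (a : α),
      M'.eval w a = M.eval (replicate (w.count a) a) := by
    intro w a
    exact heval w M'.start a
  refine ⟨α → σ, inferInstance, M', ?_, ?_⟩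
  · rw [Fintype.card_fun, hcard, hk]
  · ext w
    rw [DFA.mem_accepts]
    constructor
    · rintro ⟨u, hu, hsu⟩
      refine down_transfer M L hL hcomm u w ?_ hu
      intro a
      rw [hsu a, hevalw w a]
    · intro hw
      refine ⟨w, hw, ?_⟩
      intro a
      rw [hevalw w a]
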